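/- For positive definite matrices Σ₀ and Σ_f, the matrix S = Σ₀^{1/2}(Σ₀^{1/2} Σ_f Σ₀^{1/2})^{1/2} Σ₀^{-1/2} satisfies the positive semidefinite block constraint: the block matrix [[Σ₀, S],[Sᵀ, Σ_f]] is positive semidefinite. -/

import Mathlib

set_option autoImplicit false
open Matrix
noncomputable section

open scoped ComplexOrder in
/-- `Matrix.PosSemidef.sqrt` was removed from Mathlib; restored here with its old definition. -/
def Matrix.PosSemidef.sqrt {n : Type*} [Fintype n] [DecidableEq n] {𝕜 : Type*} [RCLike 𝕜]
    {A : Matrix n n 𝕜} (hA : PosSemidef A) : Matrix n n 𝕜 :=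
  hA.1.eigenvectorUnitary.1 * diagonal ((↑) ∘ (√·) ∘ hA.1.eigenvalues) *
    (star hA.1.eigenvectorUnitary : Matrix n n 𝕜)

open scoped ComplexOrder in
theorem Matrix.PosSemidef.posSemidef_sqrt {n : Type*} [Fintype n] [DecidableEq n] {𝕜 : Type*}
    [RCLike 𝕜] {A : Matrix n n 𝕜} (hA : PosSemidef A) : PosSemidef hA.sqrt := by
  have hD : (diagonal ((RCLike.ofReal : ℝ → 𝕜) ∘ (√·) ∘ hA.1.eigenvalues)).PosSemidef := by
    rw [Matrix.posSemidef_diagonal_iff]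
    intro i
    simp only [Function.comp_apply, RCLike.ofReal_nonneg]
    exact Real.sqrt_nonneg _
  have := hD.mul_mul_conjTranspose_same (hA.1.eigenvectorUnitary : Matrix n n 𝕜)
  unfold Matrix.PosSemidef.sqrt
  simpa [Matrix.star_eq_conjTranspose] using this

open scoped ComplexOrder in
theorem Matrix.PosSemidef.sqrt_mul_self_aux {n : Type*} [Fintype n] [DecidableEq n] {𝕜 : Type*}
    [RCLike 𝕜] {A : Matrix n n 𝕜} (hA : PosSemidef A) : hA.sqrt * hA.sqrt = A := by
  have hU : (star hA.1.eigenvectorUnitary : Matrix n n 𝕜) * hA.1.eigenvectorUnitary.1 = 1 :=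
    Unitary.star_mul_self_of_mem hA.1.eigenvectorUnitary.2
  have hD : diagonal ((RCLike.ofReal : ℝ → 𝕜) ∘ (√·) ∘ hA.1.eigenvalues) *
      diagonal ((RCLike.ofReal : ℝ → 𝕜) ∘ (√·) ∘ hA.1.eigenvalues) =
      diagonal ((RCLike.ofReal : ℝ → 𝕜) ∘ hA.1.eigenvalues) := by
    rw [diagonal_mul_diagonal]
    congr 1; funext i
    simp only [Function.comp_apply, ← RCLike.ofReal_mul]
    rw [Real.mul_self_sqrt (hA.eigenvalues_nonneg i)]
  unfold Matrix.PosSemidef.sqrt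
  conv_rhs => rw [hA.1.spectral_theorem]
  rw [Unitary.conjStarAlgAut_apply]
  calc _ = hA.1.eigenvectorUnitary.1 * diagonal ((RCLike.ofReal : ℝ → 𝕜) ∘ (√·) ∘ hA.1.eigenvalues) *
      ((star hA.1.eigenvectorUnitary : Matrix n n 𝕜) * hA.1.eigenvectorUnitary.1) *
      diagonal ((RCLike.ofReal : ℝ → 𝕜) ∘ (√·) ∘ hA.1.eigenvalues) *
      (star hA.1.eigenvectorUnitary : Matrix n n 𝕜) := by simp only [Matrix.mul_assoc]
    _ = _ := by rw [hU, Matrix.mul_one, Matrix.mul_assoc _ (diagonal _) (diagonal _), hD]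

/-- The middle matrix `Σ₀^{1/2} Σf Σ₀^{1/2}` is positive semidefinite. -/
theorem midPosSemidef {n : ℕ} {S0 Sf : Matrix (Fin n) (Fin n) ℝ}
    (h0 : S0.PosDef) (hf : Sf.PosDef) :
    (h0.posSemidef.sqrt * Sf * h0.posSemidef.sqrt).PosSemidef := by
  have h := hf.posSemidef.mul_mul_conjTranspose_same h0.posSemidef.sqrt
  rwa [h0.posSemidef.posSemidef_sqrt.isHermitian] at h

/-- the block matrix [[Σ₀, S],[Sᵀ, Σf]] with
`S = Σ₀^{1/2} (Σ₀^{1/2} Σf Σ₀^{1/2})^{1/2} Σ₀^{-1/2}` is positive semidefinite. -/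
theorem stmt0 {n : ℕ} (S0 Sf : Matrix (Fin n) (Fin n) ℝ)
    (h0 : S0.PosDef) (hf : Sf.PosDef) :
    (Matrix.fromBlocks S0
      (h0.posSemidef.sqrt * (midPosSemidef h0 hf).sqrt * (h0.posSemidef.sqrt)⁻¹)
      (h0.posSemidef.sqrt * (midPosSemidef h0 hf).sqrt * (h0.posSemidef.sqrt)⁻¹)ᵀ
      Sf).PosSemidef := by
  set A := h0.posSemidef.sqrt with hAdef
  set M := (midPosSemidef h0 hf).sqrt with hMdef
  have hAh : Aᴴ = A := h0.posSemidef.posSemidef_sqrt.isHermitian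
  have hMh : Mᴴ = M := (midPosSemidef h0 hf).posSemidef_sqrt.isHermitian
  have hAA : A * A = S0 := h0.posSemidef.sqrt_mul_self_aux
  have hMM : M * M = A * Sf * A := (midPosSemidef h0 hf).sqrt_mul_self_aux
  have hAu : IsUnit A.det := by
    have : A.det * A.det = S0.det := by rw [← det_mul, hAA]
    have hpos : S0.det ≠ 0 := h0.det_pos.ne'
    exact isUnit_iff_ne_zero.2 fun h => hpos (by rw [← this, h, mul_zero])
  have hAinv : A⁻¹ * A = 1 := nonsing_inv_mul A hAu
  have hAinv' : A * A⁻¹ = 1 := mul_nonsing_inv A hAu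
  have hAinvh : (A⁻¹)ᴴ = A⁻¹ := by rw [conjTranspose_nonsing_inv, hAh]
  have hT : ∀ B : Matrix (Fin n) (Fin n) ℝ, Bᵀ = Bᴴ := fun B => by
    ext i j; simp [conjTranspose_apply]
  have key : Matrix.fromBlocks S0 (A * M * A⁻¹) (A * M * A⁻¹)ᵀ Sf
      = (Matrix.fromBlocks A (M * A⁻¹) 0 0)ᴴ * (Matrix.fromBlocks A (M * A⁻¹) 0 0) := by
    rw [fromBlocks_conjTranspose, fromBlocks_multiply]
    have h1 : Aᴴ * A + 0ᴴ * 0 = S0 := by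
      rw [hAh, hAA]; simp
    have h2 : Aᴴ * (M * A⁻¹) + 0ᴴ * 0 = A * M * A⁻¹ := by
      rw [hAh]; simp [Matrix.mul_assoc]
    have h3 : (M * A⁻¹)ᴴ * A + 0ᴴ * 0 = (A * M * A⁻¹)ᵀ := by
      rw [hT, conjTranspose_mul, conjTranspose_mul, conjTranspose_mul, hAh, hMh, hAinvh]
      simp [Matrix.mul_assoc]
    have h4 : (M * A⁻¹)ᴴ * (M * A⁻¹) + 0ᴴ * 0 = Sf := by
      rw [conjTranspose_mul, hMh, hAinvh]
      simp only [conjTranspose_zero, Matrix.zero_mul, add_zero]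
      calc A⁻¹ * M * (M * A⁻¹) = A⁻¹ * (M * M) * A⁻¹ := by
            simp [Matrix.mul_assoc]
        _ = A⁻¹ * (A * Sf * A) * A⁻¹ := by rw [hMM]
        _ = (A⁻¹ * A) * Sf * (A * A⁻¹) := by simp [Matrix.mul_assoc]
        _ = Sf := by rw [hAinv, hAinv']; simp
    rw [h1, h2, h3, h4]
  rw [key]
  exact posSemidef_conjTranspose_mul_self _
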